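/- (Section 4.2, Case 4) Assume S is a NO instance of k-OV: every k vectors v_1,…,v_k ∈ S (repetitions allowed) have a common coordinate x ∈ [d] with v_1[x] = ⋯ = v_k[x] = 1. Then for every vertex α ∈ V \ {u,v} and every vertex β ∈ B, we have d(α,β) ≤ k. -/

import Mathlib

namespace DiamLB

/-! ## Generic directed-graph notions -/

/-- There is a directed walk of length `n` from `a` to `b`. -/
def HasWalkLen {V : Type*} (Adj : V → V → Prop) : ℕ → V → V → Prop
  | 0, a, b => a = b
  | n + 1, a, b => ∃ c, Adj a c ∧ HasWalkLen Adj n c b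

/-- `P 0, P 1, …, P n` is a directed walk. -/
def IsWalk {V : Type*} (Adj : V → V → Prop) (P : ℕ → V) (n : ℕ) : Prop :=
  ∀ t, t < n → Adj (P t) (P (t + 1))

/-- The shortest-path distance from `a` to `b` is at most `m`. -/
def DistLE {V : Type*} (Adj : V → V → Prop) (a b : V) (m : ℕ) : Prop :=
  ∃ n ≤ m, HasWalkLen Adj n a b

/-! ## The construction (Section 3, `k ≥ 5`) -/

/-- Boolean vectors of length `d`, i.e. elements of `{0,1}^d`. -/
abbrev Vec (d : ℕ) := Fin d → Bool

/-- The all-ones vector. -/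
def ones (d : ℕ) : Vec d := fun _ => true

/-- Tags naming the layers of the construction. -/
inductive Tag : Type
  | L (i : ℕ)
  | L' (i : ℕ)
  | A (i : ℕ)
  | B (i : ℕ)

/-- Potential vertices of the construction: a tagged partial tuple of vectors
(position `j : Fin k` holding the vector with 1-based index `j+1`) together with a
coordinate array `x` (1-based entry `x_ℓ` at position `ℓ-1 : Fin (k-1)`), plus the two
special vertices `uu` (the vertex `u`) and `vv` (the vertex `v`).  Vertices carrying no
coordinate array in the paper are modelled with the all-zero coordinate array. -/
inductive Vert (k d : ℕ) : Type
  | node (tag : Tag) (p : Fin k → Option (Vec d)) (x : Fin (k - 1) → Fin d) : Vert k d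
  | uu : Vert k d
  | vv : Vert k d

/-- The positions (0-based) satisfying `F` are filled by vectors of `S`, and the other
positions are empty. -/
def FillsS (k d : ℕ) (S : Finset (Vec d)) (F : ℕ → Prop) (p : Fin k → Option (Vec d)) :
    Prop :=
  ∀ j : Fin k, (F (j : ℕ) → ∃ a ∈ S, p j = some a) ∧ (¬ F (j : ℕ) → p j = none)

/-- The dummy (all-zero) coordinate array, used for vertices that carry no coordinate
array in the paper. -/
def ZeroX (k d : ℕ) (x : Fin (k - 1) → Fin d) : Prop :=
  ∀ ℓ, (x ℓ : ℕ) = 0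

/-- The compatibility condition between the vector tuple and the coordinate array of a
vertex of `L_i` (Table 1): for `1 ≤ j ≤ k-i` (the `a_j`), `a_j[x_ℓ] = 1` for all
`1 ≤ ℓ ≤ k-j`, and for `k-i+3 ≤ j ≤ k` (the `b_j`), `b_j[x_ℓ] = 1` for all
`k-j+1 ≤ ℓ ≤ k-1`.  (Everything is 0-based here: position `j` holds the vector with
1-based index `j+1`, and `x ℓ` is the 1-based coordinate `x_{ℓ+1}`.) -/
def BitCond (k d : ℕ) (i : ℕ) (p : Fin k → Option (Vec d)) (x : Fin (k - 1) → Fin d) :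
    Prop :=
  (∀ j : Fin k, (j : ℕ) < k - i → ∀ w, p j = some w →
    ∀ ℓ : Fin (k - 1), (ℓ : ℕ) < k - ((j : ℕ) + 1) → w (x ℓ) = true) ∧
  (∀ j : Fin k, k - i + 2 ≤ (j : ℕ) → ∀ w, p j = some w →
    ∀ ℓ : Fin (k - 1), k - ((j : ℕ) + 1) ≤ (ℓ : ℕ) → w (x ℓ) = true)

/-- The layer `L_i`, for `i = 1, …, k+1`. -/
def setL (k d : ℕ) (S : Finset (Vec d)) (i : ℕ) : Set (Vert k d) :=
  { w | ∃ p x, w = Vert.node (Tag.L i) p x ∧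
      ((i = 1 ∧ FillsS k d S (fun j => j < k - 1) p ∧ ZeroX k d x) ∨
       (i = k + 1 ∧ FillsS k d S (fun j => 1 ≤ j) p ∧ ZeroX k d x) ∨
       (2 ≤ i ∧ i ≤ k ∧ FillsS k d S (fun j => j < k - i ∨ k - i + 2 ≤ j) p ∧
         BitCond k d i p x)) }

/-- The layer `L'_i`, for `i = 3, …, k-1`: same vector tuples as `L_i` but with an
arbitrary coordinate array. -/
def setL' (k d : ℕ) (S : Finset (Vec d)) (i : ℕ) : Set (Vert k d) :=
  { w | ∃ p x, w = Vert.node (Tag.L' i) p x ∧ 3 ≤ i ∧ i ≤ k - 1 ∧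
      FillsS k d S (fun j => j < k - i ∨ k - i + 2 ≤ j) p }

/-- The set `A_i`, for `i = 4, …, k-1`: tuples `(a_1, …, a_{k-i})`. -/
def setA (k d : ℕ) (S : Finset (Vec d)) (i : ℕ) : Set (Vert k d) :=
  { w | ∃ p x, w = Vert.node (Tag.A i) p x ∧ 4 ≤ i ∧ i ≤ k - 1 ∧
      FillsS k d S (fun j => j < k - i) p ∧ ZeroX k d x }

/-- The set `B_i`, for `i = 3, …, k-2`: tuples `(b_{k-i+3}, …, b_k)`. -/
def setB (k d : ℕ) (S : Finset (Vec d)) (i : ℕ) : Set (Vert k d) :=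
  { w | ∃ p x, w = Vert.node (Tag.B i) p x ∧ 3 ≤ i ∧ i ≤ k - 2 ∧
      FillsS k d S (fun j => k - i + 2 ≤ j) p ∧ ZeroX k d x }

/-- `L = ∪_i L_i`. -/
def setLall (k d : ℕ) (S : Finset (Vec d)) : Set (Vert k d) := ⋃ i, setL k d S i

/-- `L' = ∪_i L'_i`. -/
def setL'all (k d : ℕ) (S : Finset (Vec d)) : Set (Vert k d) := ⋃ i, setL' k d S i

/-- `A = ∪_i A_i`. -/
def setAall (k d : ℕ) (S : Finset (Vec d)) : Set (Vert k d) := ⋃ i, setA k d S i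

/-- `B = ∪_i B_i`. -/
def setBall (k d : ℕ) (S : Finset (Vec d)) : Set (Vert k d) := ⋃ i, setB k d S i

/-- Level `i` is `L_i ∪ L'_i ∪ A_i ∪ B_i`. -/
def level (k d : ℕ) (S : Finset (Vec d)) (i : ℕ) : Set (Vert k d) :=
  setL k d S i ∪ setL' k d S i ∪ setA k d S i ∪ setB k d S i

/-- The vertex set of the graph `G`. -/
def VertexSet (k d : ℕ) (S : Finset (Vec d)) : Set (Vert k d) :=
  setLall k d S ∪ setL'all k d S ∪ setAall k d S ∪ setBall k d S ∪ {Vert.uu, Vert.vv}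

/-! ### Edges -/

/-- One orientation of the (undirected) swap edges.  Between `L_i` and `L_{i+1}`
(`2 ≤ i ≤ k-1`) the vector `a_{k-i}` (0-based position `k-i-1`) is exchanged for the
vector `b_{k-i+2}` (0-based position `k-i+1`), keeping the coordinate array; between
`L_1` and `L_2` the vector `a_{k-1}` is exchanged for a coordinate array; between
`L_{k+1}` and `L_k` the vector `b_2` is exchanged for a coordinate array. -/
def SwapE (k d : ℕ) (S : Finset (Vec d)) (α β : Vert k d) : Prop :=
  (∃ i p x p' x', 2 ≤ i ∧ i ≤ k - 1 ∧
      α = Vert.node (Tag.L i) p x ∧ β = Vert.node (Tag.L (i + 1)) p' x' ∧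
      α ∈ setL k d S i ∧ β ∈ setL k d S (i + 1) ∧ x' = x ∧
      (∀ j : Fin k, (j : ℕ) ≠ k - i - 1 → (j : ℕ) ≠ k - i + 1 → p' j = p j)) ∨
  (∃ p x p' x',
      α = Vert.node (Tag.L 1) p x ∧ β = Vert.node (Tag.L 2) p' x' ∧
      α ∈ setL k d S 1 ∧ β ∈ setL k d S 2 ∧
      (∀ j : Fin k, (j : ℕ) ≠ k - 2 → p' j = p j)) ∨
  (∃ p x p' x',
      α = Vert.node (Tag.L (k + 1)) p x ∧ β = Vert.node (Tag.L k) p' x' ∧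
      α ∈ setL k d S (k + 1) ∧ β ∈ setL k d S k ∧
      (∀ j : Fin k, (j : ℕ) ≠ 1 → p' j = p j))

/-- One orientation of the (undirected) vector-change edges between `L_i` and `L'_i`
(`3 ≤ i ≤ k-1`): same coordinate array, same vectors except possibly one of `a_{k-i}`
(position `k-i-1`) or `b_{k-i+3}` (position `k-i+2`). -/
def VecE (k d : ℕ) (S : Finset (Vec d)) (α β : Vert k d) : Prop :=
  ∃ i p x p' x', 3 ≤ i ∧ i ≤ k - 1 ∧
    α = Vert.node (Tag.L i) p x ∧ β = Vert.node (Tag.L' i) p' x' ∧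
    α ∈ setL k d S i ∧ β ∈ setL' k d S i ∧ x' = x ∧
    ((∀ j : Fin k, (j : ℕ) ≠ k - i - 1 → p' j = p j) ∨
     (∀ j : Fin k, (j : ℕ) ≠ k - i + 2 → p' j = p j))

/-- The (undirected, symmetric as stated) coordinate-change edges: two distinct
vertices with the same vector tuple, within each `L'_i`, between `L'_i` and `L_i`,
within `L_2` and within `L_k`. -/
def CoordE (k d : ℕ) (S : Finset (Vec d)) (α β : Vert k d) : Prop :=
  ∃ t t' p x x', α = Vert.node t p x ∧ β = Vert.node t' p x' ∧ α ≠ β ∧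
    ((∃ i, α ∈ setL' k d S i ∧ β ∈ setL' k d S i) ∨
     (∃ i, α ∈ setL' k d S i ∧ β ∈ setL k d S i) ∨
     (∃ i, α ∈ setL k d S i ∧ β ∈ setL' k d S i) ∨
     (α ∈ setL k d S 2 ∧ β ∈ setL k d S 2) ∨
     (α ∈ setL k d S k ∧ β ∈ setL k d S k))

/-- The directed `a`-type back edges: from `L_i ∪ L'_i` to the matching prefix in `A_i`;
from `A_i` to every vertex of `L'_4` with the matching prefix; and from `A_{k-1}`
to every vertex of `A_i` with the same first vector `a_1`. -/
def ABack (k d : ℕ) (S : Finset (Vec d)) (α β : Vert k d) : Prop :=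
  (∃ i t p x p' x', (α ∈ setL k d S i ∨ α ∈ setL' k d S i) ∧ β ∈ setA k d S i ∧
      α = Vert.node t p x ∧ β = Vert.node (Tag.A i) p' x' ∧
      (∀ j : Fin k, (j : ℕ) < k - i → p' j = p j)) ∨
  (∃ i p x p' x', α ∈ setA k d S i ∧ β ∈ setL' k d S 4 ∧
      α = Vert.node (Tag.A i) p x ∧ β = Vert.node (Tag.L' 4) p' x' ∧
      (∀ j : Fin k, (j : ℕ) < k - i → p' j = p j)) ∨
  (∃ i p x p' x', α ∈ setA k d S (k - 1) ∧ β ∈ setA k d S i ∧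
      α = Vert.node (Tag.A (k - 1)) p x ∧ β = Vert.node (Tag.A i) p' x' ∧
      (∀ j : Fin k, (j : ℕ) = 0 → p' j = p j))

/-- The directed `b`-type back edges: from `B_i` to every vertex of `L_i ∪ L'_i` with
the matching suffix; from every vertex of `L'_{k-2}` to the vertex of `B_i` with the
matching suffix; and from `B_i` to the vertex of `B_3` with the same last vector. -/
def BBack (k d : ℕ) (S : Finset (Vec d)) (α β : Vert k d) : Prop :=
  (∃ i t p x p' x', α ∈ setB k d S i ∧ (β ∈ setL k d S i ∨ β ∈ setL' k d S i) ∧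
      α = Vert.node (Tag.B i) p x ∧ β = Vert.node t p' x' ∧
      (∀ j : Fin k, k - i + 2 ≤ (j : ℕ) → p j = p' j)) ∨
  (∃ i p x p' x', α ∈ setL' k d S (k - 2) ∧ β ∈ setB k d S i ∧
      α = Vert.node (Tag.L' (k - 2)) p x ∧ β = Vert.node (Tag.B i) p' x' ∧
      (∀ j : Fin k, k - i + 2 ≤ (j : ℕ) → p' j = p j)) ∨
  (∃ i p x p' x', α ∈ setB k d S i ∧ β ∈ setB k d S 3 ∧
      α = Vert.node (Tag.B i) p x ∧ β = Vert.node (Tag.B 3) p' x' ∧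
      (∀ j : Fin k, (j : ℕ) = k - 1 → p' j = p j))

/-- The directed `ba`-type back edges: from every vertex of `B_i` to every vertex of
`A_i`, for `4 ≤ i ≤ k-2`. -/
def BABack (k d : ℕ) (S : Finset (Vec d)) (α β : Vert k d) : Prop :=
  ∃ i, 4 ≤ i ∧ i ≤ k - 2 ∧ α ∈ setB k d S i ∧ β ∈ setA k d S i

/-- The directed fixed edges: `L'_{k-2} → v`, `v → L_1 ∪ L_2`, `L_k ∪ L_{k+1} → u`,
and `u → L'_4`. -/
def FixedE (k d : ℕ) (S : Finset (Vec d)) (α β : Vert k d) : Prop :=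
  (α ∈ setL' k d S (k - 2) ∧ β = Vert.vv) ∨
  (α = Vert.vv ∧ (β ∈ setL k d S 1 ∨ β ∈ setL k d S 2)) ∨
  ((α ∈ setL k d S k ∨ α ∈ setL k d S (k + 1)) ∧ β = Vert.uu) ∨
  (α = Vert.uu ∧ β ∈ setL' k d S 4)

/-- The adjacency relation of the graph `G` (undirected edges appear in both
directions). -/
def Adj (k d : ℕ) (S : Finset (Vec d)) (α β : Vert k d) : Prop :=
  SwapE k d S α β ∨ SwapE k d S β α ∨ VecE k d S α β ∨ VecE k d S β α ∨
  CoordE k d S α β ∨ ABack k d S α β ∨ BBack k d S α β ∨ BABack k d S α β ∨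
  FixedE k d S α β

/-! ### Loops and covers (Section 5) -/

/-- `t` is the first time at which the walk `P` (of length `n`) visits `L_i`. -/
def FirstVisit (k d : ℕ) (S : Finset (Vec d)) (P : ℕ → Vert k d) (n i t : ℕ) : Prop :=
  t ≤ n ∧ P t ∈ setL k d S i ∧ ∀ s, s < t → P s ∉ setL k d S i

/-- `t` is the last time at which the walk `P` (of length `n`) visits `L_i`. -/
def LastVisit (k d : ℕ) (S : Finset (Vec d)) (P : ℕ → Vert k d) (n i t : ℕ) : Prop :=
  t ≤ n ∧ P t ∈ setL k d S i ∧ ∀ s, t < s → s ≤ n → P s ∉ setL k d S i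

/-- The layer `L_i` is in a loop: the walk `P` visits `L_i` at least twice. -/
def InLoop (k d : ℕ) (S : Finset (Vec d)) (P : ℕ → Vert k d) (n i : ℕ) : Prop :=
  ∃ t1 t2, t1 < t2 ∧ t2 ≤ n ∧ P t1 ∈ setL k d S i ∧ P t2 ∈ setL k d S i

/-- The walk `P` visits `A`. -/
def VisitsA (k d : ℕ) (S : Finset (Vec d)) (P : ℕ → Vert k d) (n : ℕ) : Prop :=
  ∃ t ≤ n, P t ∈ setAall k d S

/-- The walk `P` visits `B`. -/
def VisitsB (k d : ℕ) (S : Finset (Vec d)) (P : ℕ → Vert k d) (n : ℕ) : Prop :=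
  ∃ t ≤ n, P t ∈ setBall k d S

/-- The layer `L_i` covers the layer `L_m` (with respect to the walk `P` of length `n`):
for `3 ≤ i ≤ k-1`, `L_i` covers `L_{i-1}` if `L_{i-1}` is not in a loop, `L_i` is in a
loop, and the first and last vertices of `P` in `L_i` differ in the vector `b_{k-i+3}`
(0-based position `k-i+2`) and in the coordinate array; symmetrically `L_i` covers
`L_{i+1}` using the vector `a_{k-i}` (0-based position `k-i-1`).  Additionally `L_4`
covers both `L_3` and `L_2` if `P` visits `A`, and `L_{k-2}` covers both `L_{k-1}` and
`L_k` if `P` visits `B`. -/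
def Covers (k d : ℕ) (S : Finset (Vec d)) (P : ℕ → Vert k d) (n : ℕ) (i m : ℕ) : Prop :=
  (3 ≤ i ∧ i ≤ k - 1 ∧ m + 1 = i ∧ ¬ InLoop k d S P n m ∧ InLoop k d S P n i ∧
    ∃ t1 t2 p1 x1 p2 x2, FirstVisit k d S P n i t1 ∧ LastVisit k d S P n i t2 ∧
      P t1 = Vert.node (Tag.L i) p1 x1 ∧ P t2 = Vert.node (Tag.L i) p2 x2 ∧
      (∀ j : Fin k, (j : ℕ) = k - i + 2 → p1 j ≠ p2 j) ∧ x1 ≠ x2) ∨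
  (3 ≤ i ∧ i ≤ k - 1 ∧ m = i + 1 ∧ ¬ InLoop k d S P n m ∧ InLoop k d S P n i ∧
    ∃ t1 t2 p1 x1 p2 x2, FirstVisit k d S P n i t1 ∧ LastVisit k d S P n i t2 ∧
      P t1 = Vert.node (Tag.L i) p1 x1 ∧ P t2 = Vert.node (Tag.L i) p2 x2 ∧
      (∀ j : Fin k, (j : ℕ) = k - i - 1 → p1 j ≠ p2 j) ∧ x1 ≠ x2) ∨
  (i = 4 ∧ (m = 3 ∨ m = 2) ∧ VisitsA k d S P n) ∨
  (i = k - 2 ∧ (m = k - 1 ∨ m = k) ∧ VisitsB k d S P n)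

/-! ### Auxiliary machinery for the proof of Statement 8 -/

section AuxProof

variable {k d : ℕ} {S : Finset (Vec d)}

theorem hwl_step {V : Type*} {A : V → V → Prop} {a b : V} (h : A a b) :
    HasWalkLen A 1 a b := ⟨b, h, rfl⟩

theorem hwl_append {V : Type*} {A : V → V → Prop} :
    ∀ {n m : ℕ} {a b c : V}, HasWalkLen A n a b → HasWalkLen A m b c →
      HasWalkLen A (n + m) a c := by
  intro n
  induction n with
  | zero =>
    intro m a b c h1 h2
    simp only [HasWalkLen] at h1
    rw [show 0 + m = m by omega]
    exact h1 ▸ h2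
  | succ n ih =>
    intro m a b c h1 h2
    obtain ⟨e, he, h1'⟩ := h1
    rw [show n + 1 + m = (n + m) + 1 by omega]
    exact ⟨e, he, ih h1' h2⟩

/-- The canonical partial tuple at level `c` built from a prefix family `qa` and a
suffix family `qb`. -/
def pCan {k d : ℕ} (qa qb : Fin k → Vec d) (c : ℕ) : Fin k → Option (Vec d) :=
  fun j => if (j : ℕ) < k - c then some (qa j) else
    if k - c + 2 ≤ (j : ℕ) then some (qb j) else none

/-- The key property of a coordinate array `x`: coordinate `x ℓ` is a common
1-coordinate of all `qa j` with `j + ℓ + 2 ≤ k` and all `qb j` with `j + ℓ + 2 > k`. -/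
def HxP (k d : ℕ) (qa qb : Fin k → Vec d) (x : Fin (k - 1) → Fin d) : Prop :=
  ∀ (ℓ : Fin (k - 1)) (j : Fin k),
    ((j : ℕ) + (ℓ : ℕ) + 2 ≤ k → qa j (x ℓ) = true) ∧
    (k < (j : ℕ) + (ℓ : ℕ) + 2 → qb j (x ℓ) = true)

theorem exists_hx (hno : ∀ f : Fin k → Vec d, (∀ j, f j ∈ S) → ∃ x : Fin d, ∀ j, f j x = true)
    (qa qb : Fin k → Vec d) (hqa : ∀ j, qa j ∈ S) (hqb : ∀ j, qb j ∈ S) :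
    ∃ x : Fin (k - 1) → Fin d, HxP k d qa qb x := by
  have h : ∀ ℓ : Fin (k - 1), ∃ y : Fin d, ∀ j : Fin k,
      ((j : ℕ) + (ℓ : ℕ) + 2 ≤ k → qa j y = true) ∧
      (k < (j : ℕ) + (ℓ : ℕ) + 2 → qb j y = true) := by
    intro ℓ
    obtain ⟨y, hy⟩ := hno (fun j => if (j : ℕ) + (ℓ : ℕ) + 2 ≤ k then qa j else qb j)
      (fun j => by split <;> [exact hqa j; exact hqb j])
    refine ⟨y, fun j => ⟨fun h => ?_, fun h => ?_⟩⟩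
    · have := hy j; rwa [if_pos h] at this
    · have := hy j; rwa [if_neg (by omega)] at this
  choose x hx using h
  exact ⟨x, fun ℓ j => hx ℓ j⟩

theorem fills_pCan {qa qb : Fin k → Vec d} (hqa : ∀ j, qa j ∈ S) (hqb : ∀ j, qb j ∈ S)
    (c : ℕ) :
    FillsS k d S (fun j => j < k - c ∨ k - c + 2 ≤ j) (pCan qa qb c) := by
  intro j
  constructor
  · intro hF
    by_cases h1 : (j : ℕ) < k - c
    · exact ⟨qa j, hqa j, by simp [pCan, h1]⟩
    · have h2 : k - c + 2 ≤ (j : ℕ) := hF.resolve_left h1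
      exact ⟨qb j, hqb j, by simp [pCan, h1, h2]⟩
  · intro hF
    have h1 : ¬ ((j : ℕ) < k - c) := fun h => hF (Or.inl h)
    have h2 : ¬ (k - c + 2 ≤ (j : ℕ)) := fun h => hF (Or.inr h)
    simp [pCan, h1, h2]

theorem bit_pCan {qa qb : Fin k → Vec d} {x : Fin (k - 1) → Fin d}
    (hx : HxP k d qa qb x) (c : ℕ) : BitCond k d c (pCan qa qb c) x := by
  constructor
  · intro j hj w hw ℓ hℓ
    rw [pCan, if_pos hj] at hw
    rw [← Option.some.inj hw]
    exact (hx ℓ j).1 (by omega)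
  · intro j hj w hw ℓ hℓ
    have hj1 : ¬ ((j : ℕ) < k - c) := by omega
    rw [pCan, if_neg hj1, if_pos hj] at hw
    rw [← Option.some.inj hw]
    have := j.isLt
    exact (hx ℓ j).2 (by omega)

theorem memL_pCan {qa qb : Fin k → Vec d} {x : Fin (k - 1) → Fin d}
    (hqa : ∀ j, qa j ∈ S) (hqb : ∀ j, qb j ∈ S) (hx : HxP k d qa qb x)
    {c : ℕ} (h2 : 2 ≤ c) (hck : c ≤ k) :
    Vert.node (Tag.L c) (pCan qa qb c) x ∈ setL k d S c :=
  ⟨_, _, rfl, Or.inr (Or.inr ⟨h2, hck, fills_pCan hqa hqb c, bit_pCan hx c⟩)⟩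

theorem memL'_pCan {qa qb : Fin k → Vec d}
    (hqa : ∀ j, qa j ∈ S) (hqb : ∀ j, qb j ∈ S)
    {c : ℕ} (h3 : 3 ≤ c) (hck : c ≤ k - 1) (x : Fin (k - 1) → Fin d) :
    Vert.node (Tag.L' c) (pCan qa qb c) x ∈ setL' k d S c :=
  ⟨_, _, rfl, h3, hck, fills_pCan hqa hqb c⟩

theorem swap_pCan {qa qb : Fin k → Vec d} {x : Fin (k - 1) → Fin d}
    (hqa : ∀ j, qa j ∈ S) (hqb : ∀ j, qb j ∈ S) (hx : HxP k d qa qb x)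
    {c : ℕ} (h2 : 2 ≤ c) (hc : c + 1 ≤ k) :
    SwapE k d S (Vert.node (Tag.L c) (pCan qa qb c) x)
      (Vert.node (Tag.L (c + 1)) (pCan qa qb (c + 1)) x) := by
  left
  refine ⟨c, _, x, _, x, h2, by omega, rfl, rfl,
    memL_pCan hqa hqb hx h2 (by omega),
    memL_pCan hqa hqb hx (by omega) hc, rfl, ?_⟩
  intro j hj1 hj2
  have hjk := j.isLt
  simp only [pCan]
  by_cases ha : (j : ℕ) < k - (c + 1)
  · rw [if_pos ha, if_pos (by omega)]
  · rw [if_neg ha]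
    by_cases hb : k - (c + 1) + 2 ≤ (j : ℕ)
    · rw [if_pos hb, if_neg (by omega), if_pos (by omega)]
    · rw [if_neg hb, if_neg (by omega), if_neg (by omega)]

theorem walkUp_pCan {qa qb : Fin k → Vec d} {x : Fin (k - 1) → Fin d}
    (hqa : ∀ j, qa j ∈ S) (hqb : ∀ j, qb j ∈ S) (hx : HxP k d qa qb x) :
    ∀ (n c : ℕ), 2 ≤ c → c + n ≤ k →
      HasWalkLen (Adj k d S) n (Vert.node (Tag.L c) (pCan qa qb c) x)
        (Vert.node (Tag.L (c + n)) (pCan qa qb (c + n)) x) := by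
  intro n
  induction n with
  | zero => intro c h2 hc; simp [HasWalkLen]
  | succ n ih =>
    intro c h2 hc
    rw [show c + (n + 1) = (c + 1) + n by omega]
    exact ⟨_, Or.inl (swap_pCan hqa hqb hx h2 (by omega)), ih (c + 1) (by omega) (by omega)⟩

theorem walkDown_pCan {qa qb : Fin k → Vec d} {x : Fin (k - 1) → Fin d}
    (hqa : ∀ j, qa j ∈ S) (hqb : ∀ j, qb j ∈ S) (hx : HxP k d qa qb x) :
    ∀ (n c : ℕ), 2 ≤ c → c + n ≤ k →
      HasWalkLen (Adj k d S) n (Vert.node (Tag.L (c + n)) (pCan qa qb (c + n)) x)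
        (Vert.node (Tag.L c) (pCan qa qb c) x) := by
  intro n
  induction n with
  | zero => intro c h2 hc; simp [HasWalkLen]
  | succ n ih =>
    intro c h2 hc
    rw [show c + (n + 1) = (c + n) + 1 by omega]
    exact ⟨_, Or.inr (Or.inl (swap_pCan hqa hqb hx (by omega) (by omega))), ih c h2 (by omega)⟩

theorem vecE_pCan {qa qbL qbR : Fin k → Vec d} {x : Fin (k - 1) → Fin d} {c : ℕ}
    (h3 : 3 ≤ c) (hc : c ≤ k - 1)
    (hmL : Vert.node (Tag.L c) (pCan qa qbL c) x ∈ setL k d S c)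
    (hmL' : Vert.node (Tag.L' c) (pCan qa qbR c) x ∈ setL' k d S c)
    (hpp : ∀ j : Fin k, (j : ℕ) ≠ k - c + 2 → pCan qa qbR c j = pCan qa qbL c j) :
    VecE k d S (Vert.node (Tag.L c) (pCan qa qbL c) x)
      (Vert.node (Tag.L' c) (pCan qa qbR c) x) :=
  ⟨c, _, x, _, x, h3, hc, rfl, rfl, hmL, hmL', rfl, Or.inr hpp⟩

theorem hpp3 (hk : 5 ≤ k) (qa qbL qbR : Fin k → Vec d) :
    ∀ j : Fin k, (j : ℕ) ≠ k - 3 + 2 → pCan qa qbR 3 j = pCan qa qbL 3 j := by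
  intro j hj
  have hjk := j.isLt
  simp only [pCan]
  by_cases h1 : (j : ℕ) < k - 3
  · rw [if_pos h1, if_pos h1]
  · rw [if_neg h1, if_neg h1, if_neg (by omega), if_neg (by omega)]

theorem coordE_L'L {c : ℕ} {p : Fin k → Option (Vec d)} {x x' : Fin (k - 1) → Fin d}
    (hm' : Vert.node (Tag.L' c) p x ∈ setL' k d S c)
    (hm : Vert.node (Tag.L c) p x' ∈ setL k d S c) :
    CoordE k d S (Vert.node (Tag.L' c) p x) (Vert.node (Tag.L c) p x') :=
  ⟨_, _, p, x, x', rfl, rfl, by simp, Or.inr (Or.inl ⟨c, hm', hm⟩)⟩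

/-- the canonical `qa` extracted from a partial tuple. -/
def qaOf {k d : ℕ} (p : Fin k → Option (Vec d)) (c : ℕ) : Fin k → Vec d :=
  fun j => if (j : ℕ) < k - c then (p j).getD (ones d) else ones d

/-- the canonical `qb` extracted from a partial tuple. -/
def qbOf {k d : ℕ} (p : Fin k → Option (Vec d)) (c : ℕ) : Fin k → Vec d :=
  fun j => if k - c + 2 ≤ (j : ℕ) then (p j).getD (ones d) else ones d

theorem qaOf_mem {p : Fin k → Option (Vec d)} {c : ℕ} (hone : ones d ∈ S)
    (h : ∀ j : Fin k, (j : ℕ) < k - c → ∃ a ∈ S, p j = some a) :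
    ∀ j, qaOf p c j ∈ S := by
  intro j
  unfold qaOf
  split
  · next h1 => obtain ⟨a, haS, ha⟩ := h j h1; rw [ha]; exact haS
  · exact hone

theorem qbOf_mem {p : Fin k → Option (Vec d)} {c : ℕ} (hone : ones d ∈ S)
    (h : ∀ j : Fin k, k - c + 2 ≤ (j : ℕ) → ∃ a ∈ S, p j = some a) :
    ∀ j, qbOf p c j ∈ S := by
  intro j
  unfold qbOf
  split
  · next h1 => obtain ⟨a, haS, ha⟩ := h j h1; rw [ha]; exact haS
  · exact hone

theorem norm_p {p : Fin k → Option (Vec d)} {c : ℕ}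
    (hf : FillsS k d S (fun j => j < k - c ∨ k - c + 2 ≤ j) p) :
    p = pCan (qaOf p c) (qbOf p c) c := by
  funext j
  by_cases h1 : (j : ℕ) < k - c
  · obtain ⟨a, _, ha⟩ := (hf j).1 (Or.inl h1)
    simp [pCan, qaOf, h1, ha]
  · by_cases h2 : k - c + 2 ≤ (j : ℕ)
    · obtain ⟨a, _, ha⟩ := (hf j).1 (Or.inr h2)
      simp [pCan, qbOf, h1, h2, ha]
    · have hn := (hf j).2 (not_or.mpr ⟨h1, h2⟩)
      simp [pCan, h1, h2, hn]

theorem norm_hx {p : Fin k → Option (Vec d)} {c : ℕ} {x : Fin (k - 1) → Fin d}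
    (hf : FillsS k d S (fun j => j < k - c ∨ k - c + 2 ≤ j) p)
    (hb : BitCond k d c p x) :
    HxP k d (qaOf p c) (qbOf p c) x := by
  intro ℓ j
  constructor
  · intro h
    unfold qaOf
    split
    · next h1 =>
      obtain ⟨a, _, ha⟩ := (hf j).1 (Or.inl h1)
      have := hb.1 j h1 a ha ℓ (by omega)
      rw [ha]; exact this
    · rfl
  · intro h
    unfold qbOf
    split
    · next h2 =>
      obtain ⟨a, _, ha⟩ := (hf j).1 (Or.inr h2)
      have := hb.2 j h2 a ha ℓ (by omega)
      rw [ha]; exact this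
    · rfl

end AuxProof
/-- **Section 4.2, Case 4.**  Assume `S` is a NO instance of `k`-OV:
every `k` vectors of `S` (repetitions allowed) have a common coordinate at which they
all equal `1`.  Then for every vertex `α ∈ V \ {u,v}` and every vertex `β ∈ B`, we
have `d(α,β) ≤ k`. -/
theorem case4_no_instance (k d : ℕ) (hk : 5 ≤ k) (hd : 1 ≤ d)
    (S : Finset (Vec d)) (hone : ones d ∈ S)
    (hno : ∀ f : Fin k → Vec d, (∀ j, f j ∈ S) → ∃ x : Fin d, ∀ j, f j x = true)
    (α : Vert k d) (hα : α ∈ VertexSet k d S) (hαu : α ≠ Vert.uu) (hαv : α ≠ Vert.vv)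
    (β : Vert k d) (hβ : β ∈ setBall k d S) :
    DistLE (Adj k d S) α β k := by
  classical
  -- Adj introduction helpers
  have adjSwap : ∀ {a b : Vert k d}, SwapE k d S a b → Adj k d S a b := fun h => Or.inl h
  have adjSwap' : ∀ {a b : Vert k d}, SwapE k d S b a → Adj k d S a b :=
    fun h => Or.inr (Or.inl h)
  have adjVec : ∀ {a b : Vert k d}, VecE k d S a b → Adj k d S a b :=
    fun h => Or.inr (Or.inr (Or.inl h))
  have adjVec' : ∀ {a b : Vert k d}, VecE k d S b a → Adj k d S a b :=
    fun h => Or.inr (Or.inr (Or.inr (Or.inl h)))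
  have adjCoord : ∀ {a b : Vert k d}, CoordE k d S a b → Adj k d S a b :=
    fun h => Or.inr (Or.inr (Or.inr (Or.inr (Or.inl h))))
  have adjABack : ∀ {a b : Vert k d}, ABack k d S a b → Adj k d S a b :=
    fun h => Or.inr (Or.inr (Or.inr (Or.inr (Or.inr (Or.inl h)))))
  have adjBBack : ∀ {a b : Vert k d}, BBack k d S a b → Adj k d S a b :=
    fun h => Or.inr (Or.inr (Or.inr (Or.inr (Or.inr (Or.inr (Or.inl h))))))
  have adjBA : ∀ {a b : Vert k d}, BABack k d S a b → Adj k d S a b :=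
    fun h => Or.inr (Or.inr (Or.inr (Or.inr (Or.inr (Or.inr (Or.inr (Or.inl h)))))))
  have adjFix : ∀ {a b : Vert k d}, FixedE k d S a b → Adj k d S a b :=
    fun h => Or.inr (Or.inr (Or.inr (Or.inr (Or.inr (Or.inr (Or.inr (Or.inr h)))))))
  -- the all-zero coordinate array
  set z : Fin (k - 1) → Fin d := fun _ => ⟨0, hd⟩ with hzdef
  have hz : ZeroX k d z := fun ℓ => rfl
  -- β data
  simp only [setBall, Set.mem_iUnion] at hβ
  obtain ⟨Bi, pβ, xβ, hβeq, h3i, hik2, hfillβ, hzeroβ⟩ := hβ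
  have hβmem : β ∈ setB k d S Bi := ⟨pβ, xβ, hβeq, h3i, hik2, hfillβ, hzeroβ⟩
  set qbv : Fin k → Vec d := fun j => (pβ j).getD (ones d) with hqbvdef
  have hqbS : ∀ j, qbv j ∈ S := by
    intro j
    by_cases hj : k - Bi + 2 ≤ (j : ℕ)
    · obtain ⟨a, haS, ha⟩ := (hfillβ j).1 hj
      rw [hqbvdef]; dsimp only; rw [ha]; exact haS
    · rw [hqbvdef]; dsimp only; rw [(hfillβ j).2 hj]; exact hone
  -- the final hop from `L'_{k-2}` to `β`
  have hopD : ∀ (qa : Fin k → Vec d), (∀ j, qa j ∈ S) → ∀ x : Fin (k - 1) → Fin d,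
      Adj k d S (Vert.node (Tag.L' (k - 2)) (pCan qa qbv (k - 2)) x) β := by
    intro qa hqa x
    refine adjBBack (Or.inr (Or.inl ⟨Bi, _, x, pβ, xβ,
      memL'_pCan hqa hqbS (by omega) (by omega) x, hβmem, rfl, hβeq, ?_⟩))
    intro j hj
    obtain ⟨a, haS, ha⟩ := (hfillβ j).1 hj
    have h1 : ¬ ((j : ℕ) < k - (k - 2)) := by omega
    have h2 : k - (k - 2) + 2 ≤ (j : ℕ) := by omega
    rw [ha]
    simp only [pCan, if_neg h1, if_pos h2, hqbvdef]
    rw [ha]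
    rfl
  -- the canonical tail walk
  have tail : ∀ (qa : Fin k → Vec d), (∀ j, qa j ∈ S) → ∀ x, HxP k d qa qbv x →
      ∀ c, 2 ≤ c → c ≤ k - 2 →
      HasWalkLen (Adj k d S) (k - c) (Vert.node (Tag.L c) (pCan qa qbv c) x) β := by
    intro qa hqa x hx c h2 hc
    have hup := walkUp_pCan (S := S) hqa hqbS hx (k - 2 - c) c h2 (by omega)
    rw [show c + (k - 2 - c) = k - 2 by omega] at hup
    have e1 : Adj k d S (Vert.node (Tag.L (k - 2)) (pCan qa qbv (k - 2)) x)
        (Vert.node (Tag.L' (k - 2)) (pCan qa qbv (k - 2)) x) :=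
      adjVec (vecE_pCan (by omega) (by omega)
        (memL_pCan hqa hqbS hx (by omega) (by omega))
        (memL'_pCan hqa hqbS (by omega) (by omega) x) (fun j _ => rfl))
    have e2 := hopD qa hqa x
    have hw := hwl_append hup (hwl_append (hwl_step e1) (hwl_step e2))
    rwa [show k - 2 - c + (1 + 1) = k - c by omega] at hw
  have tail4 : ∀ (qa : Fin k → Vec d), (∀ j, qa j ∈ S) → ∀ x, HxP k d qa qbv x →
      ∃ m, m ≤ k - 2 ∧ (6 ≤ k → m + 4 ≤ k) ∧
        HasWalkLen (Adj k d S) m (Vert.node (Tag.L 4) (pCan qa qbv 4) x) β := by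
    intro qa hqa x hx
    by_cases hk6 : 6 ≤ k
    · exact ⟨k - 4, by omega, fun _ => by omega, tail qa hqa x hx 4 (by omega) (by omega)⟩
    · have hdown := walkDown_pCan (S := S) hqa hqbS hx 1 3 (by omega) (by omega)
      rw [show (3 : ℕ) + 1 = 4 by norm_num] at hdown
      have ht := tail qa hqa x hx 3 (by omega) (by omega)
      exact ⟨1 + (k - 3), by omega, fun h => absurd h hk6, hwl_append hdown ht⟩
  have fromZ : ∀ (qa : Fin k → Vec d), (∀ j, qa j ∈ S) → ∀ (qbz : Fin k → Vec d)
      (x : Fin (k - 1) → Fin d),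
      Vert.node (Tag.L 3) (pCan qa qbz 3) x ∈ setL k d S 3 →
      ∃ m, m + 1 ≤ k ∧ (k = 5 → m + 3 ≤ k) ∧
        HasWalkLen (Adj k d S) m (Vert.node (Tag.L 3) (pCan qa qbz 3) x) β := by
    intro qa hqa qbz x hZ
    have hY : Vert.node (Tag.L' 3) (pCan qa qbv 3) x ∈ setL' k d S 3 :=
      memL'_pCan hqa hqbS (by omega) (by omega) x
    have e1 : Adj k d S (Vert.node (Tag.L 3) (pCan qa qbz 3) x)
        (Vert.node (Tag.L' 3) (pCan qa qbv 3) x) :=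
      adjVec (vecE_pCan (by omega) (by omega) hZ hY (hpp3 hk qa qbz qbv))
    by_cases hk5 : k = 5
    · subst hk5
      have e2 : Adj 5 d S (Vert.node (Tag.L' 3) (pCan qa qbv 3) x) β := by
        have h := hopD qa hqa x
        norm_num at h
        exact h
      exact ⟨2, by omega, fun _ => by omega, hwl_append (hwl_step e1) (hwl_step e2)⟩
    · obtain ⟨x', hx'⟩ := exists_hx hno qa qbv hqa hqbS
      have e2 : Adj k d S (Vert.node (Tag.L' 3) (pCan qa qbv 3) x)
          (Vert.node (Tag.L 3) (pCan qa qbv 3) x') :=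
        adjCoord (coordE_L'L hY (memL_pCan hqa hqbS hx' (by omega) (by omega)))
      have ht := tail qa hqa x' hx' 3 (by omega) (by omega)
      exact ⟨1 + (1 + (k - 3)), by omega, fun h => absurd h hk5,
        hwl_append (hwl_step e1) (hwl_append (hwl_step e2) ht)⟩
  -- route via `u` for vertices of `L_k ∪ L_{k+1}` (needs `k ≥ 6`)
  have Uroute : ∀ v : Vert k d, (v ∈ setL k d S k ∨ v ∈ setL k d S (k + 1)) → 6 ≤ k →
      DistLE (Adj k d S) v β k := by
    intro v hv hk6
    have e1 : Adj k d S v Vert.uu := adjFix (Or.inr (Or.inr (Or.inl ⟨hv, rfl⟩)))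
    have hqa1 : ∀ j : Fin k, (fun _ : Fin k => ones d) j ∈ S := fun _ => hone
    obtain ⟨x', hx'⟩ := exists_hx hno (fun _ => ones d) qbv hqa1 hqbS
    have hV4 : Vert.node (Tag.L' 4) (pCan (fun _ => ones d) qbv 4) x' ∈ setL' k d S 4 :=
      memL'_pCan hqa1 hqbS (by omega) (by omega) x'
    have e2 : Adj k d S Vert.uu (Vert.node (Tag.L' 4) (pCan (fun _ => ones d) qbv 4) x') :=
      adjFix (Or.inr (Or.inr (Or.inr ⟨rfl, hV4⟩)))
    have e3 : Adj k d S (Vert.node (Tag.L' 4) (pCan (fun _ => ones d) qbv 4) x')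
        (Vert.node (Tag.L 4) (pCan (fun _ => ones d) qbv 4) x') :=
      adjCoord (coordE_L'L hV4 (memL_pCan hqa1 hqbS hx' (by omega) (by omega)))
    obtain ⟨m, hm2, hm6, hw⟩ := tail4 (fun _ => ones d) hqa1 x' hx'
    exact ⟨1 + (1 + (1 + m)), by have := hm6 hk6; omega,
      hwl_append (hwl_step e1) (hwl_append (hwl_step e2) (hwl_append (hwl_step e3) hw))⟩
  -- route via `A_c` for vertices of `L_c ∪ L'_c`, `4 ≤ c ≤ k-1` (needs `k ≥ 6`)
  have Aroute : ∀ (c : ℕ) (t : Tag) (p : Fin k → Option (Vec d)) (xα : Fin (k - 1) → Fin d),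
      (Vert.node t p xα ∈ setL k d S c ∨ Vert.node t p xα ∈ setL' k d S c) →
      (∀ j : Fin k, (j : ℕ) < k - c → ∃ a ∈ S, p j = some a) →
      4 ≤ c → c ≤ k - 1 → 6 ≤ k →
      DistLE (Adj k d S) (Vert.node t p xα) β k := by
    intro c t p xα hmem hpf h4 hc1 hk6
    have hqaS := qaOf_mem (c := c) hone hpf
    set pA : Fin k → Option (Vec d) := fun j => if (j : ℕ) < k - c then p j else none with hpA
    have hAmem : Vert.node (Tag.A c) pA z ∈ setA k d S c := by
      refine ⟨pA, z, rfl, h4, hc1, ?_, hz⟩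
      intro j
      constructor
      · intro hj
        obtain ⟨a, haS, ha⟩ := hpf j hj
        exact ⟨a, haS, by simp only [hpA]; rw [if_pos hj]; exact ha⟩
      · intro hj; simp only [hpA]; rw [if_neg hj]
    have e1 : Adj k d S (Vert.node t p xα) (Vert.node (Tag.A c) pA z) :=
      adjABack (Or.inl ⟨c, t, p, xα, pA, z, hmem, hAmem, rfl, rfl,
        fun j hj => by simp only [hpA]; rw [if_pos hj]⟩)
    obtain ⟨x', hx'⟩ := exists_hx hno (qaOf p c) qbv hqaS hqbS
    have hV4 : Vert.node (Tag.L' 4) (pCan (qaOf p c) qbv 4) x' ∈ setL' k d S 4 :=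
      memL'_pCan hqaS hqbS (by omega) (by omega) x'
    have e2 : Adj k d S (Vert.node (Tag.A c) pA z)
        (Vert.node (Tag.L' 4) (pCan (qaOf p c) qbv 4) x') := by
      refine adjABack (Or.inr (Or.inl ⟨c, pA, z, _, x', hAmem, hV4, rfl, rfl, ?_⟩))
      intro j hj
      obtain ⟨a, _, ha⟩ := hpf j hj
      have h4' : (j : ℕ) < k - 4 := by omega
      simp only [pCan, qaOf, hpA]
      rw [if_pos h4', if_pos hj, if_pos hj, ha]
      rfl
    have e3 : Adj k d S (Vert.node (Tag.L' 4) (pCan (qaOf p c) qbv 4) x')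
        (Vert.node (Tag.L 4) (pCan (qaOf p c) qbv 4) x') :=
      adjCoord (coordE_L'L hV4 (memL_pCan hqaS hqbS hx' (by omega) (by omega)))
    obtain ⟨m, hm2, hm6, hw⟩ := tail4 (qaOf p c) hqaS x' hx'
    exact ⟨1 + (1 + (1 + m)), by have := hm6 hk6; omega,
      hwl_append (hwl_step e1) (hwl_append (hwl_step e2) (hwl_append (hwl_step e3) hw))⟩
  -- main case analysis on α
  simp only [VertexSet, Set.mem_union, Set.mem_insert_iff, Set.mem_singleton_iff] at hα
  rcases hα with ((((hL | hL') | hA) | hB) | hUV)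
  · -- α ∈ L
    simp only [setLall, Set.mem_iUnion] at hL
    obtain ⟨c, hLc⟩ := hL
    obtain ⟨p, xα, hαeq, hdis⟩ := hLc
    subst hαeq
    rcases hdis with ⟨hc1, hfil, hzx⟩ | ⟨hc1, hfil, hzx⟩ | ⟨hc2, hck, hfil, hbit⟩
    · -- c = 1
      subst hc1
      have hαmem : Vert.node (Tag.L 1) p xα ∈ setL k d S 1 :=
        ⟨p, xα, rfl, Or.inl ⟨rfl, hfil, hzx⟩⟩
      have hpf : ∀ j : Fin k, (j : ℕ) < k - 2 → ∃ a ∈ S, p j = some a :=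
        fun j hj => (hfil j).1 (by omega)
      have hqaS := qaOf_mem (c := 2) hone hpf
      obtain ⟨x', hx'⟩ := exists_hx hno (qaOf p 2) qbv hqaS hqbS
      have e1 : Adj k d S (Vert.node (Tag.L 1) p xα)
          (Vert.node (Tag.L 2) (pCan (qaOf p 2) qbv 2) x') := by
        refine adjSwap (Or.inr (Or.inl ⟨p, xα, _, x', rfl, rfl, hαmem,
          memL_pCan hqaS hqbS hx' (by omega) (by omega), ?_⟩))
        intro j hj
        have hjk := j.isLt
        by_cases h1 : (j : ℕ) < k - 2
        · obtain ⟨a, _, ha⟩ := hpf j h1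
          simp only [pCan, qaOf]
          rw [if_pos h1, if_pos h1, ha]
          rfl
        · have hn := (hfil j).2 (by omega)
          have h2 : ¬ (k - 2 + 2 ≤ (j : ℕ)) := by omega
          simp only [pCan]
          rw [if_neg h1, if_neg h2, hn]
      have ht := tail (qaOf p 2) hqaS x' hx' 2 (by omega) (by omega)
      exact ⟨1 + (k - 2), by omega, hwl_append (hwl_step e1) ht⟩
    · -- c = k + 1
      subst hc1
      by_cases hk6 : 6 ≤ k
      · exact Uroute _ (Or.inr ⟨p, xα, rfl, Or.inr (Or.inl ⟨rfl, hfil, hzx⟩)⟩) hk6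
      · have hk5 : k = 5 := by omega
        subst hk5
        have hαmem : Vert.node (Tag.L (5 + 1)) p xα ∈ setL 5 d S (5 + 1) :=
          ⟨p, xα, rfl, Or.inr (Or.inl ⟨rfl, hfil, hzx⟩)⟩
        have hqa1 : ∀ j : Fin 5, (fun _ : Fin 5 => ones d) j ∈ S := fun _ => hone
        have hqbzS : ∀ j, qbOf p 5 j ∈ S :=
          qbOf_mem hone (fun j hj => (hfil j).1 (by omega))
        obtain ⟨x', hx'⟩ := exists_hx hno (fun _ => ones d) (qbOf p 5) hqa1 hqbzS
        have hC5 := memL_pCan (x := x') hqa1 hqbzS hx' (by omega : (2:ℕ) ≤ 5) (le_refl 5)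
        have e1 : Adj 5 d S (Vert.node (Tag.L (5 + 1)) p xα)
            (Vert.node (Tag.L 5) (pCan (fun _ => ones d) (qbOf p 5) 5) x') := by
          refine adjSwap (Or.inr (Or.inr ⟨p, xα, _, x', rfl, rfl, hαmem, hC5, ?_⟩))
          intro j hj
          have hjk := j.isLt
          by_cases h2 : 2 ≤ (j : ℕ)
          · obtain ⟨a, _, ha⟩ := (hfil j).1 (by omega)
            have h0 : ¬ ((j : ℕ) < 5 - 5) := by omega
            have h2' : 5 - 5 + 2 ≤ (j : ℕ) := by omega
            simp only [pCan, qbOf]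
            rw [if_neg h0, if_pos h2', if_pos h2', ha]
            rfl
          · have hn := (hfil j).2 (by omega)
            have h0 : ¬ ((j : ℕ) < 5 - 5) := by omega
            have h2' : ¬ (5 - 5 + 2 ≤ (j : ℕ)) := by omega
            simp only [pCan]
            rw [if_neg h0, if_neg h2', hn]
        have hdown := walkDown_pCan (S := S) hqa1 hqbzS hx' 2 3 (by omega) (by omega)
        rw [show (3 : ℕ) + 2 = 5 by norm_num] at hdown
        have hZ := memL_pCan (x := x') hqa1 hqbzS hx' (by omega : (2:ℕ) ≤ 3) (by omega)
        obtain ⟨m, hm1, hm5, hw⟩ := fromZ (fun _ => ones d) hqa1 (qbOf p 5) x' hZ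
        exact ⟨1 + (2 + m), by have := hm5 rfl; omega,
          hwl_append (hwl_step e1) (hwl_append hdown hw)⟩
    · -- 2 ≤ c ≤ k
      have hαmem : Vert.node (Tag.L c) p xα ∈ setL k d S c :=
        ⟨p, xα, rfl, Or.inr (Or.inr ⟨hc2, hck, hfil, hbit⟩)⟩
      by_cases hcc2 : c = 2
      · subst hcc2
        set p1 : Fin k → Option (Vec d) :=
          fun j => if (j : ℕ) = k - 2 then some (ones d) else p j with hp1
        have hL1mem : Vert.node (Tag.L 1) p1 z ∈ setL k d S 1 := by
          refine ⟨p1, z, rfl, Or.inl ⟨rfl, ?_, hz⟩⟩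
          intro j
          constructor
          · intro hj
            by_cases h1 : (j : ℕ) = k - 2
            · exact ⟨ones d, hone, by simp only [hp1]; rw [if_pos h1]⟩
            · obtain ⟨a, haS, ha⟩ := (hfil j).1 (Or.inl (by omega))
              exact ⟨a, haS, by simp only [hp1]; rw [if_neg h1, ha]⟩
          · intro hj
            have hjk := j.isLt
            have h1 : ¬ ((j : ℕ) = k - 2) := by omega
            have hn := (hfil j).2 (by omega)
            simp only [hp1]
            rw [if_neg h1, hn]
        have e1 : Adj k d S (Vert.node (Tag.L 2) p xα) (Vert.node (Tag.L 1) p1 z) := by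
          refine adjSwap' (Or.inr (Or.inl ⟨p1, z, p, xα, rfl, rfl, hL1mem, hαmem, ?_⟩))
          intro j hj
          simp only [hp1]
          rw [if_neg hj]
        have hpf : ∀ j : Fin k, (j : ℕ) < k - 2 → ∃ a ∈ S, p j = some a :=
          fun j hj => (hfil j).1 (Or.inl hj)
        have hqaS := qaOf_mem (c := 2) hone hpf
        obtain ⟨x', hx'⟩ := exists_hx hno (qaOf p 2) qbv hqaS hqbS
        have e2 : Adj k d S (Vert.node (Tag.L 1) p1 z)
            (Vert.node (Tag.L 2) (pCan (qaOf p 2) qbv 2) x') := by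
          refine adjSwap (Or.inr (Or.inl ⟨p1, z, _, x', rfl, rfl, hL1mem,
            memL_pCan hqaS hqbS hx' (by omega) (by omega), ?_⟩))
          intro j hj
          have hjk := j.isLt
          by_cases h1 : (j : ℕ) < k - 2
          · obtain ⟨a, _, ha⟩ := hpf j h1
            have hne : ¬ ((j : ℕ) = k - 2) := by omega
            simp only [pCan, qaOf, hp1]
            rw [if_pos h1, if_pos h1, if_neg hne, ha]
            rfl
          · have hn := (hfil j).2 (by omega)
            have hne : ¬ ((j : ℕ) = k - 2) := by omega
            have h2 : ¬ (k - 2 + 2 ≤ (j : ℕ)) := by omega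
            simp only [pCan, hp1]
            rw [if_neg h1, if_neg h2, if_neg hne, hn]
        have ht := tail (qaOf p 2) hqaS x' hx' 2 (by omega) (by omega)
        exact ⟨1 + (1 + (k - 2)), by omega,
          hwl_append (hwl_step e1) (hwl_append (hwl_step e2) ht)⟩
      · by_cases hcc3 : c = 3
        · subst hcc3
          have hnorm := norm_p (S := S) hfil
          have hx := norm_hx (S := S) hfil hbit
          have hqaS := qaOf_mem (c := 3) hone (fun j hj => (hfil j).1 (Or.inl hj))
          have hqbzS := qbOf_mem (c := 3) hone (fun j hj => (hfil j).1 (Or.inr hj))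
          have hZ : Vert.node (Tag.L 3) (pCan (qaOf p 3) (qbOf p 3) 3) xα ∈ setL k d S 3 :=
            memL_pCan hqaS hqbzS hx (by omega) (by omega)
          obtain ⟨m, hm1, hm5, hw⟩ := fromZ (qaOf p 3) hqaS (qbOf p 3) xα hZ
          rw [hnorm]
          exact ⟨m, by omega, hw⟩
        · by_cases hcc4 : c = 4
          · subst hcc4
            have hnorm := norm_p (S := S) hfil
            have hx := norm_hx (S := S) hfil hbit
            have hqaS := qaOf_mem (c := 4) hone (fun j hj => (hfil j).1 (Or.inl hj))
            have hqbzS := qbOf_mem (c := 4) hone (fun j hj => (hfil j).1 (Or.inr hj))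
            have hdown := walkDown_pCan (S := S) hqaS hqbzS hx 1 3 (by omega) (by omega)
            rw [show (3 : ℕ) + 1 = 4 by norm_num] at hdown
            have hZ : Vert.node (Tag.L 3) (pCan (qaOf p 4) (qbOf p 4) 3) xα ∈ setL k d S 3 :=
              memL_pCan hqaS hqbzS hx (by omega) (by omega)
            obtain ⟨m, hm1, hm5, hw⟩ := fromZ (qaOf p 4) hqaS (qbOf p 4) xα hZ
            rw [hnorm]
            exact ⟨1 + m, by omega, hwl_append hdown hw⟩
          · by_cases hcck : c = k
            · rw [hcck] at hαmem hfil hbit ⊢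
              by_cases hk6 : 6 ≤ k
              · exact Uroute _ (Or.inl hαmem) hk6
              · have hk5 : k = 5 := by omega
                subst hk5
                have hnorm := norm_p (S := S) hfil
                have hx := norm_hx (S := S) hfil hbit
                have hqaS := qaOf_mem (c := 5) hone (fun j hj => (hfil j).1 (Or.inl hj))
                have hqbzS := qbOf_mem (c := 5) hone (fun j hj => (hfil j).1 (Or.inr hj))
                have hdown := walkDown_pCan (S := S) hqaS hqbzS hx 2 3 (by omega) (by omega)
                rw [show (3 : ℕ) + 2 = 5 by norm_num] at hdown
                have hZ : Vert.node (Tag.L 3) (pCan (qaOf p 5) (qbOf p 5) 3) xα ∈ setL 5 d S 3 :=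
                  memL_pCan hqaS hqbzS hx (by omega) (by omega)
                obtain ⟨m, hm1, hm5, hw⟩ := fromZ (qaOf p 5) hqaS (qbOf p 5) xα hZ
                rw [hnorm]
                exact ⟨2 + m, by have := hm5 rfl; omega, hwl_append hdown hw⟩
            · -- 5 ≤ c ≤ k - 1
              exact Aroute c (Tag.L c) p xα (Or.inl hαmem)
                (fun j hj => (hfil j).1 (Or.inl hj)) (by omega) (by omega) (by omega)
  · -- α ∈ L'
    simp only [setL'all, Set.mem_iUnion] at hL'
    obtain ⟨c, hLc⟩ := hL'
    obtain ⟨p, xα, hαeq, h3c, hck1, hfil⟩ := hLc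
    subst hαeq
    have hα'mem : Vert.node (Tag.L' c) p xα ∈ setL' k d S c := ⟨p, xα, rfl, h3c, hck1, hfil⟩
    by_cases hcc3 : c = 3
    · subst hcc3
      have hnorm := norm_p (S := S) hfil
      have hqaS := qaOf_mem (c := 3) hone (fun j hj => (hfil j).1 (Or.inl hj))
      have hqbzS := qbOf_mem (c := 3) hone (fun j hj => (hfil j).1 (Or.inr hj))
      obtain ⟨x0, hx0⟩ := exists_hx hno (qaOf p 3) (qbOf p 3) hqaS hqbzS
      have hF : Vert.node (Tag.L 3) (pCan (qaOf p 3) (qbOf p 3) 3) x0 ∈ setL k d S 3 :=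
        memL_pCan hqaS hqbzS hx0 (by omega) (by omega)
      rw [hnorm] at hα'mem
      have e1 := adjCoord (coordE_L'L hα'mem hF)
      obtain ⟨m, hm1, hm5, hw⟩ := fromZ (qaOf p 3) hqaS (qbOf p 3) x0 hF
      rw [hnorm]
      exact ⟨1 + m, by omega, hwl_append (hwl_step e1) hw⟩
    · by_cases hk5 : k = 5
      · subst hk5
        have hc4 : c = 4 := by omega
        subst hc4
        have hnorm := norm_p (S := S) hfil
        have hqaS := qaOf_mem (c := 4) hone (fun j hj => (hfil j).1 (Or.inl hj))
        have hqbzS := qbOf_mem (c := 4) hone (fun j hj => (hfil j).1 (Or.inr hj))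
        obtain ⟨x0, hx0⟩ := exists_hx hno (qaOf p 4) (qbOf p 4) hqaS hqbzS
        have hF4 : Vert.node (Tag.L 4) (pCan (qaOf p 4) (qbOf p 4) 4) x0 ∈ setL 5 d S 4 :=
          memL_pCan hqaS hqbzS hx0 (by omega) (by omega)
        rw [hnorm] at hα'mem
        have e1 := adjCoord (coordE_L'L hα'mem hF4)
        have hdown := walkDown_pCan (S := S) hqaS hqbzS hx0 1 3 (by omega) (by omega)
        rw [show (3 : ℕ) + 1 = 4 by norm_num] at hdown
        have hZ : Vert.node (Tag.L 3) (pCan (qaOf p 4) (qbOf p 4) 3) x0 ∈ setL 5 d S 3 :=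
          memL_pCan hqaS hqbzS hx0 (by omega) (by omega)
        obtain ⟨m, hm1, hm5, hw⟩ := fromZ (qaOf p 4) hqaS (qbOf p 4) x0 hZ
        rw [hnorm]
        exact ⟨1 + (1 + m), by have := hm5 rfl; omega,
          hwl_append (hwl_step e1) (hwl_append hdown hw)⟩
      · exact Aroute c (Tag.L' c) p xα (Or.inr hα'mem)
          (fun j hj => (hfil j).1 (Or.inl hj)) (by omega) hck1 (by omega)
  · -- α ∈ A
    simp only [setAall, Set.mem_iUnion] at hA
    obtain ⟨c, hAc⟩ := hA
    obtain ⟨p, xα, hαeq, h4, hck1, hfil, hzx⟩ := hAc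
    subst hαeq
    have hαmem : Vert.node (Tag.A c) p xα ∈ setA k d S c := ⟨p, xα, rfl, h4, hck1, hfil, hzx⟩
    have hpf : ∀ j : Fin k, (j : ℕ) < k - c → ∃ a ∈ S, p j = some a :=
      fun j hj => (hfil j).1 hj
    have hqaS := qaOf_mem (c := c) hone hpf
    obtain ⟨x', hx'⟩ := exists_hx hno (qaOf p c) qbv hqaS hqbS
    have hV4 : Vert.node (Tag.L' 4) (pCan (qaOf p c) qbv 4) x' ∈ setL' k d S 4 :=
      memL'_pCan hqaS hqbS (by omega) (by omega) x'
    have e1 : Adj k d S (Vert.node (Tag.A c) p xα)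
        (Vert.node (Tag.L' 4) (pCan (qaOf p c) qbv 4) x') := by
      refine adjABack (Or.inr (Or.inl ⟨c, p, xα, _, x', hαmem, hV4, rfl, rfl, ?_⟩))
      intro j hj
      obtain ⟨a, _, ha⟩ := hpf j hj
      have h4' : (j : ℕ) < k - 4 := by omega
      simp only [pCan, qaOf]
      rw [if_pos h4', if_pos hj, ha]
      rfl
    have e2 : Adj k d S (Vert.node (Tag.L' 4) (pCan (qaOf p c) qbv 4) x')
        (Vert.node (Tag.L 4) (pCan (qaOf p c) qbv 4) x') :=
      adjCoord (coordE_L'L hV4 (memL_pCan hqaS hqbS hx' (by omega) (by omega)))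
    obtain ⟨m, hm2, hm6, hw⟩ := tail4 (qaOf p c) hqaS x' hx'
    exact ⟨1 + (1 + m), by omega,
      hwl_append (hwl_step e1) (hwl_append (hwl_step e2) hw)⟩
  · -- α ∈ B
    simp only [setBall, Set.mem_iUnion] at hB
    obtain ⟨c, hBc⟩ := hB
    obtain ⟨p, xα, hαeq, h3, hck2, hfil, hzx⟩ := hBc
    subst hαeq
    have hαmem : Vert.node (Tag.B c) p xα ∈ setB k d S c := ⟨p, xα, rfl, h3, hck2, hfil, hzx⟩
    by_cases hcc3 : c = 3
    · subst hcc3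
      have hqa1 : ∀ j : Fin k, (fun _ : Fin k => ones d) j ∈ S := fun _ => hone
      set qb3 : Fin k → Vec d :=
        fun j => if (j : ℕ) = k - 1 then (p j).getD (ones d) else qbv j with hqb3
      have hqb3S : ∀ j, qb3 j ∈ S := by
        intro j
        rw [hqb3]
        dsimp only
        split
        · next h1 =>
          obtain ⟨a, haS, ha⟩ := (hfil j).1 (by omega)
          rw [ha]
          exact haS
        · exact hqbS j
      obtain ⟨x', hx'⟩ := exists_hx hno (fun _ => ones d) qbv hqa1 hqbS
      have hE : Vert.node (Tag.L' 3) (pCan (fun _ => ones d) qb3 3) x' ∈ setL' k d S 3 :=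
        memL'_pCan hqa1 hqb3S (by omega) (by omega) x'
      have e1 : Adj k d S (Vert.node (Tag.B 3) p xα)
          (Vert.node (Tag.L' 3) (pCan (fun _ => ones d) qb3 3) x') := by
        refine adjBBack (Or.inl ⟨3, Tag.L' 3, p, xα, _, x', hαmem, Or.inr hE, rfl, rfl, ?_⟩)
        intro j hj
        have hjk := j.isLt
        have hj1 : (j : ℕ) = k - 1 := by omega
        obtain ⟨a, _, ha⟩ := (hfil j).1 hj
        have h1 : ¬ ((j : ℕ) < k - 3) := by omega
        rw [ha]
        simp only [pCan, hqb3]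
        rw [if_neg h1, if_pos hj, if_pos hj1, ha]
        rfl
      have hC3 := memL_pCan (x := x') hqa1 hqbS hx' (by omega : (2:ℕ) ≤ 3) (by omega)
      have e2 : Adj k d S (Vert.node (Tag.L' 3) (pCan (fun _ => ones d) qb3 3) x')
          (Vert.node (Tag.L 3) (pCan (fun _ => ones d) qbv 3) x') :=
        adjVec' (vecE_pCan (by omega) (by omega) hC3 hE (hpp3 hk _ qbv qb3))
      have ht := tail (fun _ => ones d) hqa1 x' hx' 3 (by omega) (by omega)
      exact ⟨1 + (1 + (k - 3)), by omega,
        hwl_append (hwl_step e1) (hwl_append (hwl_step e2) ht)⟩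
    · -- 4 ≤ c ≤ k - 2
      set pA : Fin k → Option (Vec d) :=
        fun j => if (j : ℕ) < k - c then some (ones d) else none with hpA
      have hAmem : Vert.node (Tag.A c) pA z ∈ setA k d S c := by
        refine ⟨pA, z, rfl, by omega, by omega, ?_, hz⟩
        intro j
        exact ⟨fun hj => ⟨ones d, hone, by simp only [hpA]; rw [if_pos hj]⟩,
          fun hj => by simp only [hpA]; rw [if_neg hj]⟩
      have e1 : Adj k d S (Vert.node (Tag.B c) p xα) (Vert.node (Tag.A c) pA z) :=
        adjBA ⟨c, by omega, hck2, hαmem, hAmem⟩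
      have hqa1 : ∀ j : Fin k, (fun _ : Fin k => ones d) j ∈ S := fun _ => hone
      obtain ⟨x', hx'⟩ := exists_hx hno (fun _ => ones d) qbv hqa1 hqbS
      have hV4 : Vert.node (Tag.L' 4) (pCan (fun _ => ones d) qbv 4) x' ∈ setL' k d S 4 :=
        memL'_pCan hqa1 hqbS (by omega) (by omega) x'
      have e2 : Adj k d S (Vert.node (Tag.A c) pA z)
          (Vert.node (Tag.L' 4) (pCan (fun _ => ones d) qbv 4) x') := by
        refine adjABack (Or.inr (Or.inl ⟨c, pA, z, _, x', hAmem, hV4, rfl, rfl, ?_⟩))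
        intro j hj
        have h4' : (j : ℕ) < k - 4 := by omega
        simp only [pCan, hpA]
        rw [if_pos h4', if_pos hj]
      have e3 : Adj k d S (Vert.node (Tag.L' 4) (pCan (fun _ => ones d) qbv 4) x')
          (Vert.node (Tag.L 4) (pCan (fun _ => ones d) qbv 4) x') :=
        adjCoord (coordE_L'L hV4 (memL_pCan hqa1 hqbS hx' (by omega) (by omega)))
      obtain ⟨m, hm2, hm6, hw⟩ := tail4 (fun _ => ones d) hqa1 x' hx'
      exact ⟨1 + (1 + (1 + m)), by have := hm6 (by omega); omega,
        hwl_append (hwl_step e1) (hwl_append (hwl_step e2) (hwl_append (hwl_step e3) hw))⟩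
  · -- α ∈ {u, v}
    rcases hUV with h | h
    · exact absurd h hαu
    · exact absurd h hαv

end DiamLB
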